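/- For a > 0 and b ∈ ℝ let π₀(a,b) be the unitary operator on L²((0,∞), ℂ) defined (almost everywhere) by (π₀(a,b)η)(y) = a^{−1} · e^{iyb/a} · η(y/a²). If T is a bounded linear operator on L²((0,∞), ℂ) such that T ∘ π₀(a,b) = π₀(a,b) ∘ T for all a > 0 and b ∈ ℝ, then there exists c ∈ ℂ with T = c · Id. (That is, the restriction of the representation π₀ of the group H to L²((0,∞)) is irreducible; together with the analogous statement on L²((−∞,0)), π₀ splits into exactly two irreducible subrepresentations.) -/

import Mathlib

set_option maxHeartbeats 1600000


open MeasureTheory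

namespace S13aux

open Set Complex FourierTransform Real
open scoped ContDiff

noncomputable section

/-- Pack a smooth compactly supported real function as a complex Schwartz map. -/
def toSchwartzC (g : ℝ → ℝ) (hg : ContDiff ℝ ∞ g) (hsupp : HasCompactSupport g) :
    SchwartzMap ℝ ℂ where
  toFun := fun x => (g x : ℂ)
  smooth' := Complex.ofRealCLM.contDiff.comp hg
  decay' := by
    have hgc : ContDiff ℝ ∞ (fun x => (g x : ℂ)) := Complex.ofRealCLM.contDiff.comp hg
    have hsc : HasCompactSupport (fun x => (g x : ℂ)) :=
      hsupp.comp_left (g := fun r : ℝ => (r : ℂ)) (by simp)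
    intro k n
    have h1 : HasCompactSupport (iteratedFDeriv ℝ n (fun x => (g x : ℂ))) :=
      hsc.iteratedFDeriv n
    have h2 : Continuous (iteratedFDeriv ℝ n (fun x => (g x : ℂ))) :=
      hgc.continuous_iteratedFDeriv (mod_cast le_top)
    have h3 : Continuous (fun x : ℝ => ‖x‖ ^ k * ‖iteratedFDeriv ℝ n (fun x => (g x : ℂ)) x‖) := by
      fun_prop
    have h4 : HasCompactSupport
        (fun x : ℝ => ‖x‖ ^ k * ‖iteratedFDeriv ℝ n (fun x => (g x : ℂ)) x‖) :=
      (h1.norm).mul_left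
    obtain ⟨C, hC⟩ := h3.bounded_above_of_compact_support h4
    exact ⟨C, fun x => (le_abs_self _).trans ((Real.norm_eq_abs _) ▸ hC x)⟩

/-- Uniqueness of the Fourier transform for `L¹` functions on `ℝ`. -/
lemma fourier_eq_zero_ae {h : ℝ → ℂ} (hh : Integrable h)
    (hF : ∀ ξ : ℝ, 𝓕 h ξ = 0) : ∀ᵐ x : ℝ, h x = 0 := by
  apply ae_eq_zero_of_integral_contDiff_smul_eq_zero hh.locallyIntegrable
  intro g hg hgsupp
  set ψ : SchwartzMap ℝ ℂ := toSchwartzC g hg hgsupp with hψ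
  set Ψ : SchwartzMap ℝ ℂ := (SchwartzMap.fourierTransformCLE ℂ (SchwartzMap ℝ ℂ)).symm ψ with hΨ
  have hFΨ : 𝓕 ⇑Ψ = ⇑ψ := by
    have : SchwartzMap.fourierTransformCLM ℂ Ψ = (SchwartzMap.fourierTransformCLE ℂ (SchwartzMap ℝ ℂ)) Ψ := rfl
    rw [← SchwartzMap.fourier_coe, ← SchwartzMap.fourierTransformCLM_apply (𝕜 := ℂ)]
    rw [this, hΨ, (SchwartzMap.fourierTransformCLE ℂ (SchwartzMap ℝ ℂ)).apply_symm_apply]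
  have hflip : (innerₗ ℝ).flip = innerₗ ℝ := by
    apply LinearMap.ext; intro x; apply LinearMap.ext; intro y
    simpa using real_inner_comm x y
  have key := VectorFourier.integral_fourierIntegral_smul_eq_flip
    (μ := (volume : Measure ℝ)) (ν := (volume : Measure ℝ)) (L := innerₗ ℝ)
    (f := h) (g := ⇑Ψ) Real.continuous_fourierChar
    (by exact continuous_inner) hh Ψ.integrable
  rw [hflip] at key
  have lhs0 : (∫ ξ : ℝ, (VectorFourier.fourierIntegral 𝐞 volume (innerₗ ℝ) h ξ) • Ψ ξ) = 0 := by
    have : ∀ ξ : ℝ, VectorFourier.fourierIntegral 𝐞 volume (innerₗ ℝ) h ξ = 0 := fun ξ => hF ξ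
    simp [this]
  rw [lhs0] at key
  have step1 : (∫ x : ℝ, h x • (VectorFourier.fourierIntegral 𝐞 volume (innerₗ ℝ) (⇑Ψ) x)) =
      ∫ x : ℝ, h x * (g x : ℂ) := by
    apply integral_congr_ae; filter_upwards with x
    have : VectorFourier.fourierIntegral 𝐞 volume (innerₗ ℝ) (⇑Ψ) x = 𝓕 (⇑Ψ) x := rfl
    rw [this, hFΨ]; rfl
  rw [step1] at key
  have step2 : (∫ x : ℝ, g x • h x) = ∫ x : ℝ, h x * (g x : ℂ) := by
    apply integral_congr_ae; filter_upwards with x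
    simp [mul_comm, Complex.real_smul]
  rw [step2, ← key]

abbrev ν : Measure ℝ := (volume : Measure ℝ).restrict (Set.Ioi (0:ℝ))

/-- Scaling by a positive constant preserves a.e. properties on `(0,∞)`. -/
lemma ae_scale {c : ℝ} (hc : 0 < c) {P : ℝ → Prop}
    (hP : ∀ᵐ y ∂ν, P y) : ∀ᵐ y ∂ν, P (c * y) := by
  rw [ae_iff] at hP ⊢
  rw [Measure.restrict_apply' measurableSet_Ioi] at hP ⊢
  obtain ⟨B, hsub, hBm, hB0⟩ := exists_measurable_superset_of_null hP
  have hsub2 : {y | ¬P (c * y)} ∩ Ioi 0 ⊆ (fun y => c * y) ⁻¹' B :=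
    fun y hy => hsub ⟨hy.1, mul_pos hc hy.2⟩
  refine measure_mono_null hsub2 ?_
  have : volume ((fun y => c * y) ⁻¹' B) = Measure.map (fun y => c * y) volume B := by
    rw [Measure.map_apply (measurable_const_mul c) hBm]
  rw [this, Real.map_volume_mul_left (ne_of_gt hc)]
  simp [hB0]

lemma exp_memLp {t : ℝ} (ht : 0 < t) :
    MemLp (fun y : ℝ => (Real.exp (-(t * y)) : ℂ)) 2 ν := by
  have hm : AEStronglyMeasurable (fun y : ℝ => (Real.exp (-(t * y)) : ℂ)) ν :=
    Continuous.aestronglyMeasurable (by fun_prop)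
  rw [memLp_two_iff_integrable_sq_norm hm]
  have h1 : IntegrableOn (fun y : ℝ => Real.exp (-(2 * t) * y)) (Set.Ioi 0) volume :=
    exp_neg_integrableOn_Ioi 0 (by positivity)
  refine (h1 : Integrable _ ν).congr ?_
  filter_upwards with y
  simp only [Complex.norm_real, Real.norm_eq_abs, abs_of_pos (Real.exp_pos _)]
  rw [sq, ← Real.exp_add]
  ring_nf

lemma mod_memLp (b : ℝ) (f : Lp ℂ 2 ν) :
    MemLp (fun y : ℝ => Complex.exp (Complex.I * y * b) * f y) 2 ν := by
  refine ⟨(Continuous.aestronglyMeasurable (by fun_prop)).mul (Lp.aestronglyMeasurable f), ?_⟩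
  have : eLpNorm (fun y : ℝ => Complex.exp (Complex.I * y * b) * f y) 2 ν
      = eLpNorm (⇑f) 2 ν := by
    apply eLpNorm_congr_norm_ae
    filter_upwards with y
    simp [Complex.norm_exp]
  rw [this]
  exact (Lp.memLp f).2

/-- A function in `L¹((0,∞))` all whose Fourier coefficients vanish is a.e. zero. -/
lemma vanish_of_forall_freq {w : ℝ → ℂ} (hwint : Integrable w ν)
    (key : ∀ b : ℝ, ∫ y, Complex.exp (-(Complex.I * y * b)) * w y ∂ν = 0) :
    ∀ᵐ y ∂ν, w y = 0 := by
  set H : ℝ → ℂ := (Set.Ioi (0:ℝ)).indicator w with hH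
  have hHint : Integrable H volume :=
    (integrable_indicator_iff measurableSet_Ioi).2 hwint
  have hfour : ∀ ξ : ℝ, 𝓕 H ξ = 0 := by
    intro ξ
    have step1 : 𝓕 H ξ = ∫ v : ℝ, (Set.Ioi (0:ℝ)).indicator
        (fun v => Complex.exp (-(Complex.I * v * ((2 * Real.pi * ξ : ℝ) : ℂ))) * w v) v
        ∂volume := by
      rw [Real.fourier_real_eq]
      apply integral_congr_ae
      filter_upwards with v
      by_cases hv : v ∈ Set.Ioi (0:ℝ)
      · simp only [hH, Set.indicator_of_mem hv]
        rw [Circle.smul_def, Real.fourierChar_apply]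
        congr 1
        congr 1
        push_cast
        ring
      · simp [hH, Set.indicator_of_notMem hv]
    rw [step1, integral_indicator measurableSet_Ioi]
    exact key (2 * Real.pi * ξ)
  have h1 := fourier_eq_zero_ae hHint hfour
  have h2 : ∀ᵐ y ∂ν, H y = 0 := ae_restrict_of_ae h1
  filter_upwards [h2, ae_restrict_mem measurableSet_Ioi] with y h3 h4
  rw [← Set.indicator_of_mem h4 w]
  exact h3

/-- A measurable function on `(0,∞)` that is a.e. invariant under every dilation is
a.e. constant. -/
lemma const_of_scale_inv {m : ℝ → ℂ} (hm : Measurable m)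
    (hsc : ∀ s : ℝ, 0 < s → ∀ᵐ y ∂ν, m (s * y) = m y) :
    ∃ c : ℂ, ∀ᵐ y ∂ν, m y = c := by
  have hAmeas : MeasurableSet {p : ℝ × ℝ | m (p.1 * p.2) ≠ m p.2} := by
    apply (measurableSet_eq_fun ?_ ?_).compl
    · exact hm.comp (measurable_fst.mul measurable_snd)
    · exact hm.comp measurable_snd
  have hA : (ν.prod ν) {p : ℝ × ℝ | m (p.1 * p.2) ≠ m p.2} = 0 := by
    rw [Measure.measure_prod_null hAmeas]
    filter_upwards [ae_restrict_mem measurableSet_Ioi] with s hs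
    have := hsc s hs
    rw [ae_iff] at this
    simpa using this
  have hBmeas : MeasurableSet (Prod.swap ⁻¹' {p : ℝ × ℝ | m (p.1 * p.2) ≠ m p.2}) :=
    hAmeas.preimage measurable_swap
  have hB : (ν.prod ν) (Prod.swap ⁻¹' {p : ℝ × ℝ | m (p.1 * p.2) ≠ m p.2}) = 0 := by
    rw [← Measure.map_apply measurable_swap hAmeas, Measure.prod_swap]
    exact hA
  have hslices := (Measure.measure_prod_null hBmeas).1 hB
  have hνuniv : ν Set.univ ≠ 0 := by
    rw [Measure.restrict_apply' measurableSet_Ioi]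
    simp [Real.volume_Ioi]
  have hgood : ∃ y₀ : ℝ, y₀ ∈ Set.Ioi (0:ℝ) ∧
      ν (Prod.mk y₀ ⁻¹' (Prod.swap ⁻¹' {p : ℝ × ℝ | m (p.1 * p.2) ≠ m p.2})) = 0 := by
    have h2 : ∀ᵐ y ∂ν, y ∈ Set.Ioi (0:ℝ) ∧
        ν (Prod.mk y ⁻¹' (Prod.swap ⁻¹' {p : ℝ × ℝ | m (p.1 * p.2) ≠ m p.2})) = 0 := by
      filter_upwards [ae_restrict_mem measurableSet_Ioi, hslices] with y h1 h2
      exact ⟨h1, h2⟩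
    have : (ae ν).NeBot := ae_neBot.2 (by intro h; exact hνuniv (by rw [h]; simp))
    exact h2.exists
  obtain ⟨y₀, hy₀pos, hy₀⟩ := hgood
  refine ⟨m y₀, ?_⟩
  have hae : ∀ᵐ s ∂ν, m (s * y₀) = m y₀ := by
    rw [ae_iff]
    convert hy₀ using 2
    ext s; simp
  have := ae_scale (c := y₀⁻¹) (inv_pos.2 hy₀pos) hae
  filter_upwards [this] with u hu
  have hne : y₀ ≠ 0 := ne_of_gt hy₀pos
  have h5 : y₀⁻¹ * u * y₀ = u := by
    field_simp
  rw [h5] at hu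
  exact hu

end

end S13aux

open S13aux in
/-- The representation `π₀` of the `ax+b`-group `H` on `L²((0,∞), ℂ)`,
`(π₀(a,b)η)(y) = a⁻¹ e^{iyb/a} η(y/a²)`, is irreducible: any bounded operator `T` commuting
with all `π₀(a,b)` is a scalar multiple of the identity. The commutation `T ∘ π₀(a,b) =
π₀(a,b) ∘ T` is expressed via almost-everywhere representatives: whenever `ζ` is an
a.e. representative of `π₀(a,b)η`, then `Tζ` is an a.e. representative of `π₀(a,b)(Tη)`. -/
theorem statement13
    (T : Lp ℂ 2 ((volume : Measure ℝ).restrict (Set.Ioi (0 : ℝ))) →L[ℂ]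
         Lp ℂ 2 ((volume : Measure ℝ).restrict (Set.Ioi (0 : ℝ))))
    (hT : ∀ (a b : ℝ), 0 < a →
      ∀ η ζ : Lp ℂ 2 ((volume : Measure ℝ).restrict (Set.Ioi (0 : ℝ))),
        (∀ᵐ y ∂((volume : Measure ℝ).restrict (Set.Ioi (0 : ℝ))),
          ζ y = (a : ℂ)⁻¹ * Complex.exp (Complex.I * y * b / a) * η (y / a ^ 2)) →
        (∀ᵐ y ∂((volume : Measure ℝ).restrict (Set.Ioi (0 : ℝ))),
          (T ζ) y = (a : ℂ)⁻¹ * Complex.exp (Complex.I * y * b / a) * (T η) (y / a ^ 2))) :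
    ∃ c : ℂ, T = c • ContinuousLinearMap.id ℂ
      (Lp ℂ 2 ((volume : Measure ℝ).restrict (Set.Ioi (0 : ℝ)))) := by
  classical
  -- the reference vector `g₀ = e^{-y}` and the symbol `m`
  set g₀ : Lp ℂ 2 ν := (exp_memLp one_pos).toLp _ with hg₀def
  have hg₀ : ∀ᵐ y ∂ν, g₀ y = (Real.exp (-y) : ℂ) := by
    filter_upwards [MemLp.coeFn_toLp (exp_memLp one_pos)] with y hy
    rw [hy]; norm_num
  set A : Lp ℂ 2 ν := (ContinuousLinearMap.adjoint T) g₀ with hAdef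
  set m : ℝ → ℂ := fun y => (starRingEnd ℂ) (A y) * (Real.exp y : ℂ) with hmdef
  have hm_meas : Measurable m := by
    apply Measurable.mul
    · have hconjm : Measurable fun z : ℂ => (starRingEnd ℂ) z := continuous_star.measurable
      exact hconjm.comp (Lp.stronglyMeasurable A).measurable
    · exact Complex.measurable_ofReal.comp Real.measurable_exp
  -- Step A: commutation with modulations, in a.e. form
  have stepA : ∀ (b : ℝ) (f : Lp ℂ 2 ν),
      ∀ᵐ y ∂ν, (T ((mod_memLp b f).toLp _)) y
        = Complex.exp (Complex.I * y * b) * (T f) y := by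
    intro b f
    have hyp : ∀ᵐ y ∂ν, ((mod_memLp b f).toLp _ : Lp ℂ 2 ν) y
        = ((1:ℝ) : ℂ)⁻¹ * Complex.exp (Complex.I * y * b / (1:ℝ)) * f (y / (1:ℝ) ^ 2) := by
      filter_upwards [MemLp.coeFn_toLp (mod_memLp b f)] with y hy
      rw [hy]; norm_num
    have h1 := hT 1 b one_pos f ((mod_memLp b f).toLp _) hyp
    filter_upwards [h1] with y hy
    rw [hy]; norm_num
  -- Step B: `T` is multiplication by `m`
  have stepB : ∀ f : Lp ℂ 2 ν, ∀ᵐ y ∂ν, (T f) y = m y * f y := by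
    intro f
    set w : ℝ → ℂ := fun y =>
      (starRingEnd ℂ) (f y) * A y - (starRingEnd ℂ) ((T f) y) * g₀ y with hw
    have hint1 : Integrable (fun y => (starRingEnd ℂ) (f y) * A y) ν := by
      simpa [RCLike.inner_apply, mul_comm] using L2.integrable_inner (𝕜 := ℂ) f A
    have hint2 : Integrable (fun y => (starRingEnd ℂ) ((T f) y) * g₀ y) ν := by
      simpa [RCLike.inner_apply, mul_comm] using L2.integrable_inner (𝕜 := ℂ) (T f) g₀
    have hwint : Integrable w ν := hint1.sub hint2
    have key : ∀ b : ℝ, ∫ y, Complex.exp (-(Complex.I * y * b)) * w y ∂ν = 0 := by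
      intro b
      set Eb : Lp ℂ 2 ν := (mod_memLp b f).toLp _ with hEbdef
      have hEb : ∀ᵐ y ∂ν, Eb y = Complex.exp (Complex.I * y * b) * f y :=
        MemLp.coeFn_toLp (mod_memLp b f)
      have hTEb := stepA b f
      have conj_exp : ∀ y : ℝ, (starRingEnd ℂ) (Complex.exp (Complex.I * y * b))
          = Complex.exp (-(Complex.I * y * b)) := by
        intro y
        rw [← Complex.exp_conj]
        congr 1
        simp only [map_neg, map_mul, Complex.conj_I, Complex.conj_ofReal]
        ring
      have e1 : (inner ℂ Eb A : ℂ) = inner ℂ (T Eb) g₀ :=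
        ContinuousLinearMap.adjoint_inner_right T Eb g₀
      have e2 : (inner ℂ Eb A : ℂ)
          = ∫ y, Complex.exp (-(Complex.I * y * b)) * ((starRingEnd ℂ) (f y) * A y) ∂ν := by
        rw [L2.inner_def]
        apply integral_congr_ae
        filter_upwards [hEb] with y hy
        rw [RCLike.inner_apply, hy, map_mul, conj_exp]
        ring
      have e3 : (inner ℂ (T Eb) g₀ : ℂ)
          = ∫ y, Complex.exp (-(Complex.I * y * b)) * ((starRingEnd ℂ) ((T f) y) * g₀ y) ∂ν := by
        rw [L2.inner_def]
        apply integral_congr_ae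
        filter_upwards [hTEb] with y hy
        rw [RCLike.inner_apply, hy, map_mul, conj_exp]
        ring
      have hbd : ∀ (u : ℝ → ℂ), Integrable u ν →
          Integrable (fun y : ℝ => Complex.exp (-(Complex.I * y * b)) * u y) ν := by
        intro u hu
        exact hu.bdd_mul (Continuous.aestronglyMeasurable (by fun_prop))
          (c := 1) (Filter.Eventually.of_forall fun y => by simp [Complex.norm_exp])
      rw [show (fun y : ℝ => Complex.exp (-(Complex.I * y * b)) * w y)
        = fun y : ℝ => Complex.exp (-(Complex.I * y * b)) * ((starRingEnd ℂ) (f y) * A y)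
          - Complex.exp (-(Complex.I * y * b)) * ((starRingEnd ℂ) ((T f) y) * g₀ y) by
          funext y; simp only [hw]; ring]
      rw [integral_sub (hbd _ hint1) (hbd _ hint2), ← e2, ← e3, e1, sub_self]
    have hw0 : ∀ᵐ y ∂ν, w y = 0 := vanish_of_forall_freq hwint key
    filter_upwards [hw0, hg₀] with y h1 h2
    have h1' : (starRingEnd ℂ) (f y) * A y = (starRingEnd ℂ) ((T f) y) * g₀ y :=
      sub_eq_zero.mp h1
    rw [h2] at h1'
    have h4 : f y * (starRingEnd ℂ) (A y) = (T f) y * ((Real.exp (-y) : ℝ) : ℂ) := by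
      have := congrArg (starRingEnd ℂ) h1'
      simp only [map_mul, Complex.conj_conj, Complex.conj_ofReal] at this
      exact this
    have hprod : ((Real.exp (-y) : ℝ) : ℂ) * ((Real.exp y : ℝ) : ℂ) = 1 := by
      rw [← Complex.ofReal_mul, ← Real.exp_add]
      simp
    calc (T f) y = (T f) y * (((Real.exp (-y) : ℝ) : ℂ) * ((Real.exp y : ℝ) : ℂ)) := by
          rw [hprod, mul_one]
      _ = ((T f) y * ((Real.exp (-y) : ℝ) : ℂ)) * ((Real.exp y : ℝ) : ℂ) := by ring
      _ = (f y * (starRingEnd ℂ) (A y)) * ((Real.exp y : ℝ) : ℂ) := by rw [h4]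
      _ = m y * f y := by rw [hmdef]; ring
  -- Step C: the symbol is dilation invariant
  have stepC : ∀ s : ℝ, 0 < s → ∀ᵐ y ∂ν, m (s * y) = m y := by
    intro s hs
    set a : ℝ := Real.sqrt s⁻¹ with ha
    have ha0 : 0 < a := Real.sqrt_pos.2 (inv_pos.2 hs)
    have ha2 : a ^ 2 = s⁻¹ := Real.sq_sqrt (inv_pos.2 hs).le
    have hya : ∀ y : ℝ, y / a ^ 2 = s * y := by
      intro y
      rw [ha2]
      field_simp
    have hζmem : MemLp (fun y : ℝ => ((a : ℝ) : ℂ)⁻¹ * (Real.exp (-(s * y)) : ℂ)) 2 ν :=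
      (exp_memLp hs).const_mul _
    set ζ : Lp ℂ 2 ν := hζmem.toLp _ with hζdef
    have hyp : ∀ᵐ y ∂ν, ζ y
        = ((a : ℝ) : ℂ)⁻¹ * Complex.exp (Complex.I * y * ((0:ℝ) : ℂ) / a) * g₀ (y / a ^ 2) := by
      have hg2 : ∀ᵐ y ∂ν, g₀ (s * y) = (Real.exp (-(s * y)) : ℂ) := ae_scale hs hg₀
      filter_upwards [MemLp.coeFn_toLp hζmem, hg2] with y h1 h2
      rw [h1, hya y, h2]
      norm_num
    have hconc := hT a 0 ha0 g₀ ζ hyp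
    have h3 : ∀ᵐ y ∂ν, (T g₀) (s * y) = m (s * y) * (Real.exp (-(s * y)) : ℂ) :=
      ae_scale (c := s) hs (P := fun u => (T g₀) u = m u * (Real.exp (-u) : ℂ))
        (by filter_upwards [stepB g₀, hg₀] with y h1 h2; rw [h1, h2])
    have h4 := stepB ζ
    filter_upwards [hconc, h3, h4, MemLp.coeFn_toLp hζmem] with y h5 h6 h7 h8
    rw [hya y] at h5
    rw [h7, h8] at h5
    rw [h6] at h5
    have hane : ((a : ℝ) : ℂ) ≠ 0 := by
      exact_mod_cast (ne_of_gt ha0)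
    have hEne : ((Real.exp (-(s * y)) : ℝ) : ℂ) ≠ 0 := by
      exact_mod_cast (Real.exp_pos _).ne'
    have h9 : Complex.exp (Complex.I * y * ((0:ℝ) : ℂ) / a) = 1 := by
      norm_num
    rw [h9] at h5
    -- h5 : m y * ((a)⁻¹ * exp(-(s y))) = (a)⁻¹ * 1 * (m (s y) * exp(-(s y)))
    have h10 : m y * (((a : ℝ) : ℂ)⁻¹ * ((Real.exp (-(s * y)) : ℝ) : ℂ))
        = m (s * y) * (((a : ℝ) : ℂ)⁻¹ * ((Real.exp (-(s * y)) : ℝ) : ℂ)) := by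
      rw [h5]; ring
    have hne2 : (((a : ℝ) : ℂ)⁻¹ * ((Real.exp (-(s * y)) : ℝ) : ℂ)) ≠ 0 :=
      mul_ne_zero (inv_ne_zero hane) hEne
    exact (mul_right_cancel₀ hne2 h10).symm
  -- Step D: the symbol is a.e. constant, and we conclude
  obtain ⟨c, hc⟩ := const_of_scale_inv hm_meas stepC
  refine ⟨c, ?_⟩
  apply ContinuousLinearMap.ext
  intro f
  apply Lp.ext
  filter_upwards [stepB f, hc, Lp.coeFn_smul c f] with y h1 h2 h3
  have : ((c • ContinuousLinearMap.id ℂ (Lp ℂ 2 ν)) f) = c • f := by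
    simp
  rw [this, h3, h1, h2]
  simp
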